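/- If the Baron–Myerson-with-quantity-floor schedule q* solves (ROPT), then every solution q^OPT of (ROPT) satisfies q^OPT(θ) = q*(θ) for all θ ∈ (θ̲, θ̄]. -/
import Mathlib


open MeasureTheory Set

noncomputable section

/-- The base environment: type space `Θ = [θl, θu]`, capacity `qbar`, lowest inverse
demand `Pl = P̲` (decreasing and continuous on `[0, qbar]` with `Pl 0 > θu`) and the
induced lowest demand `Dl = D̲`, with `Dl θl < qbar`. -/
structure Env where
  θl : ℝ
  θu : ℝ
  qbar : ℝ
  Pl : ℝ → ℝ
  Dl : ℝ → ℝ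
  θl_pos : 0 < θl
  θlu : θl < θu
  qbar_pos : 0 < qbar
  Pl_anti : StrictAntiOn Pl (Icc 0 qbar)
  Pl_cont : ContinuousOn Pl (Icc 0 qbar)
  Pl0 : θu < Pl 0
  Dl_inv : ∀ p, Pl qbar ≤ p → p ≤ Pl 0 → Dl p ∈ Icc (0:ℝ) qbar ∧ Pl (Dl p) = p
  Dl_high : ∀ p, Pl 0 < p → Dl p = 0
  Dl_low : ∀ p, p < Pl qbar → Dl p = qbar
  Dl_lt : Dl θl < qbar

namespace Env

/-- The type space `Θ = [θl, θu]`. -/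
def Θ (E : Env) : Set ℝ := Icc E.θl E.θu

/-- The lowest gross value function `V̲ (x) = ∫_0^x P̲`. -/
def Vl (E : Env) (x : ℝ) : ℝ := ∫ s in (0:ℝ)..x, E.Pl s

/-- `q_ℓ = D̲(θu)`: the efficient quantity at the lowest demand and highest cost. -/
def ql (E : Env) : ℝ := E.Dl E.θu

/-- `G* = V̲(q_ℓ) − θu · q_ℓ`: the maximal attainable guarantee. -/
def Gstar (E : Env) : ℝ := E.Vl E.ql - E.θu * E.ql

/-- A feasible quantity schedule: weakly decreasing on `Θ`, valued in `[0, qbar]`. -/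
def IsSchedule (E : Env) (q : ℝ → ℝ) : Prop :=
  AntitoneOn q E.Θ ∧ ∀ θ ∈ E.Θ, q θ ∈ Icc (0:ℝ) E.qbar

/-- `W̲(θ, q) = V̲(q(θ)) − θ q(θ) − ∫_θ^{θu} q`: ex-post welfare at the lowest demand
with zero rent for the highest type. -/
def Wl (E : Env) (q : ℝ → ℝ) (θ : ℝ) : ℝ :=
  E.Vl (q θ) - θ * q θ - ∫ y in θ..E.θu, q y

/-- An IC and IR (direct) quantity mechanism `(q, u)`. -/
def IsMech (E : Env) (q u : ℝ → ℝ) : Prop :=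
  E.IsSchedule q ∧ 0 ≤ u E.θu ∧
    ∀ θ ∈ E.Θ, u θ = u E.θu + ∫ y in θ..E.θu, q y

/-- The set `𝒱` of admissible gross value functions: integrals of decreasing continuous
inverse demands dominating `P̲` pointwise. -/
def IsValue (E : Env) (V : ℝ → ℝ) : Prop :=
  ∃ P : ℝ → ℝ, StrictAntiOn P (Icc 0 E.qbar) ∧ ContinuousOn P (Icc 0 E.qbar) ∧
    (∀ s ∈ Icc (0:ℝ) E.qbar, E.Pl s ≤ P s) ∧ ∀ x, V x = ∫ s in (0:ℝ)..x, P s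

/-- A Borel probability measure supported in `Θ` (the measure of a cdf `F ∈ 𝒻`). -/
def IsTech (E : Env) (μ : Measure ℝ) : Prop :=
  IsProbabilityMeasure μ ∧ μ (E.Θᶜ) = 0

/-- Ex-ante welfare `W(M; V, F)` of the mechanism `(q, u)` under value `V` and
cost technology `μ`. -/
def W (E : Env) (q u V : ℝ → ℝ) (μ : Measure ℝ) : ℝ :=
  ∫ θ, (V (q θ) - θ * q θ - u θ) ∂μ

/-- The welfare guarantee `G(M) = inf_{V ∈ 𝒱, F ∈ 𝒻} W(M; V, F)`. -/
def G (E : Env) (q u : ℝ → ℝ) : ℝ :=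
  sInf {w : ℝ | ∃ (V : ℝ → ℝ) (μ : Measure ℝ),
    E.IsValue V ∧ E.IsTech μ ∧ w = E.W q u V μ}

/-- The short list: IC and IR mechanisms with the highest guarantee. -/
def ShortList (E : Env) (q u : ℝ → ℝ) : Prop :=
  E.IsMech q u ∧ ∀ q' u' : ℝ → ℝ, E.IsMech q' u' → E.G q' u' ≤ E.G q u

/-- Feasibility in the program (ROPT): a schedule satisfying all robustness
constraints `W̲(θ, q) ≥ G*`. -/
def FeasibleROPT (E : Env) (q : ℝ → ℝ) : Prop :=
  E.IsSchedule q ∧ ∀ θ ∈ E.Θ, E.Gstar ≤ E.Wl q θ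

end Env

/-- A demand `D ∈ 𝒟`, bundled with the inverse demand `P` that induces it:
`P` decreasing and continuous on `[0, qbar]`, `P ≥ P̲` pointwise, `P 0 > θu`. -/
structure Demand (E : Env) where
  P : ℝ → ℝ
  D : ℝ → ℝ
  P_anti : StrictAntiOn P (Icc 0 E.qbar)
  P_cont : ContinuousOn P (Icc 0 E.qbar)
  P_ge : ∀ s ∈ Icc (0:ℝ) E.qbar, E.Pl s ≤ P s
  P0 : E.θu < P 0
  D_inv : ∀ p, P E.qbar ≤ p → p ≤ P 0 → D p ∈ Icc (0:ℝ) E.qbar ∧ P (D p) = p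
  D_high : ∀ p, P 0 < p → D p = 0
  D_low : ∀ p, p < P E.qbar → D p = E.qbar
  D_lt : D E.θl < E.qbar

namespace Demand

/-- The gross value function `V_D(x) = ∫_0^x P` induced by a demand `D ∈ 𝒟`. -/
def V {E : Env} (D : Demand E) (x : ℝ) : ℝ := ∫ s in (0:ℝ)..x, D.P s

end Demand

namespace Env

/-- The lowest demand `D̲` as an element of `𝒟`. -/
def DlDemand (E : Env) : Demand E where
  P := E.Pl
  D := E.Dl
  P_anti := E.Pl_anti
  P_cont := E.Pl_cont
  P_ge := fun _ _ => le_refl _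
  P0 := E.Pl0
  D_inv := E.Dl_inv
  D_high := E.Dl_high
  D_low := E.Dl_low
  D_lt := E.Dl_lt

/-- A price regulation `(p, t)`: nonnegative prices and transfers. -/
def IsPriceReg (E : Env) (p : ℝ → ℝ) (t : ℝ → Demand E → ℝ) : Prop :=
  (∀ θ ∈ E.Θ, 0 ≤ p θ) ∧ ∀ θ ∈ E.Θ, ∀ D : Demand E, 0 ≤ t θ D

/-- The rent `ũ(θ, D) = t(θ, D) − θ · D(p(θ))` of the monopolist. -/
def rent (E : Env) (p : ℝ → ℝ) (t : ℝ → Demand E → ℝ) (θ : ℝ) (D : Demand E) : ℝ :=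
  t θ D - θ * D.D (p θ)

/-- Ex-post incentive compatibility of a price regulation. -/
def EPIC (E : Env) (p : ℝ → ℝ) (t : ℝ → Demand E → ℝ) : Prop :=
  ∀ θ ∈ E.Θ, ∀ θ' ∈ E.Θ, ∀ D : Demand E,
    t θ' D - θ * D.D (p θ') ≤ E.rent p t θ D

/-- Ex-post individual rationality of a price regulation. -/
def EPIR (E : Env) (p : ℝ → ℝ) (t : ℝ → Demand E → ℝ) : Prop :=
  ∀ θ ∈ E.Θ, ∀ D : Demand E, 0 ≤ E.rent p t θ D

/-- Ex-post welfare `w̃(θ; D) = V_D(D(p(θ))) − θ·D(p(θ)) − ũ(θ, D)`. -/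
def wt (E : Env) (p : ℝ → ℝ) (t : ℝ → Demand E → ℝ) (θ : ℝ) (D : Demand E) : ℝ :=
  D.V (D.D (p θ)) - θ * D.D (p θ) - E.rent p t θ D

/-- Ex-ante welfare `W̃((p,t); D, F)` of a price regulation. -/
def Wt (E : Env) (p : ℝ → ℝ) (t : ℝ → Demand E → ℝ) (D : Demand E) (μ : Measure ℝ) : ℝ :=
  ∫ θ, E.wt p t θ D ∂μ

/-- The welfare guarantee `G̃((p,t)) = inf_{D ∈ 𝒟, F ∈ 𝒻} W̃((p,t); D, F)`. -/
def Gt (E : Env) (p : ℝ → ℝ) (t : ℝ → Demand E → ℝ) : ℝ :=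
  sInf {w : ℝ | ∃ (D : Demand E) (μ : Measure ℝ), E.IsTech μ ∧ w = E.Wt p t D μ}

/-- An EPIC and EPIR price regulation. -/
def IsAdmissiblePR (E : Env) (p : ℝ → ℝ) (t : ℝ → Demand E → ℝ) : Prop :=
  E.IsPriceReg p t ∧ E.EPIC p t ∧ E.EPIR p t

/-- The price short list: EPIC and EPIR price regulations with the highest guarantee. -/
def PriceShortList (E : Env) (p : ℝ → ℝ) (t : ℝ → Demand E → ℝ) : Prop :=
  E.IsAdmissiblePR p t ∧
    ∀ (p' : ℝ → ℝ) (t' : ℝ → Demand E → ℝ), E.IsAdmissiblePR p' t' → E.Gt p' t' ≤ E.Gt p t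

end Env

/-- The conjectured model: a regular cdf `F*` with density `f*` on `Θ`, and a
conjectured inverse demand `P*` (with induced demand `D*`) dominating `P̲`. -/
structure Model (E : Env) where
  Fstar : ℝ → ℝ
  fstar : ℝ → ℝ
  Pstar : ℝ → ℝ
  Dstar : ℝ → ℝ
  fstar_pos : ∀ θ ∈ E.Θ, 0 < fstar θ
  Fstar_ac : ∀ θ ∈ E.Θ, Fstar θ = ∫ y in E.θl..θ, fstar y
  Fstar_l : Fstar E.θl = 0
  Fstar_u : Fstar E.θu = 1
  zstar_cont : ContinuousOn (fun θ => θ + Fstar θ / fstar θ) E.Θ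
  zstar_mono : StrictMonoOn (fun θ => θ + Fstar θ / fstar θ) E.Θ
  Pstar_anti : StrictAntiOn Pstar (Icc 0 E.qbar)
  Pstar_cont : ContinuousOn Pstar (Icc 0 E.qbar)
  Pstar_ge : ∀ s ∈ Icc (0:ℝ) E.qbar, E.Pl s ≤ Pstar s
  Pstar0 : E.θu < Pstar 0
  Dstar_inv : ∀ p, Pstar E.qbar ≤ p → p ≤ Pstar 0 →
    Dstar p ∈ Icc (0:ℝ) E.qbar ∧ Pstar (Dstar p) = p
  Dstar_high : ∀ p, Pstar 0 < p → Dstar p = 0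
  Dstar_low : ∀ p, p < Pstar E.qbar → Dstar p = E.qbar
  Dstar_lt : Dstar E.θl < E.qbar

namespace Model

variable {E : Env} (Mo : Model E)

/-- The virtual cost `z*(θ) = θ + F*(θ)/f*(θ)`. -/
def zstar (θ : ℝ) : ℝ := θ + Mo.Fstar θ / Mo.fstar θ

/-- The conjectured gross value function `V*(x) = ∫_0^x P*`. -/
def Vstar (x : ℝ) : ℝ := ∫ s in (0:ℝ)..x, Mo.Pstar s

/-- The Baron–Myerson schedule `q^BM(θ) = D*(z*(θ))`. -/
def qBM (θ : ℝ) : ℝ := Mo.Dstar (Mo.zstar θ)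

/-- The Baron–Myerson-with-quantity-floor schedule `q*(θ) = max{q^BM(θ), q_ℓ}`. -/
def qstar (θ : ℝ) : ℝ := max (Mo.qBM θ) E.ql

/-- The objective of (ROPT): expected virtual surplus under the conjectured model. -/
def J (q : ℝ → ℝ) : ℝ :=
  ∫ θ in E.θl..E.θu, (Mo.Vstar (q θ) - Mo.zstar θ * q θ) * Mo.fstar θ

/-- `q` solves the program (ROPT). -/
def SolvesROPT (q : ℝ → ℝ) : Prop :=
  E.FeasibleROPT q ∧ ∀ q' : ℝ → ℝ, E.FeasibleROPT q' → Mo.J q' ≤ Mo.J q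

/-- `θ*`: the unique solution of `q^BM(θ*) = q_ℓ` in `Θ` when `q^BM(θu) < q_ℓ`;
otherwise `θ* = θu`. -/
def IsThetaStar (θs : ℝ) : Prop :=
  (Mo.qBM E.θu < E.ql ∧ θs ∈ E.Θ ∧ Mo.qBM θs = E.ql) ∨
    (E.ql ≤ Mo.qBM E.θu ∧ θs = E.θu)

/-- `θ^m`: the largest minimizer of `W̲(·, q*)` over `Θ`. -/
def IsThetaM (θm : ℝ) : Prop :=
  θm ∈ E.Θ ∧ (∀ θ' ∈ E.Θ, E.Wl Mo.qstar θm ≤ E.Wl Mo.qstar θ') ∧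
    ∀ θ ∈ E.Θ, (∀ θ' ∈ E.Θ, E.Wl Mo.qstar θ ≤ E.Wl Mo.qstar θ') → θ ≤ θm

/-- The conjectured demand `D*` as an element of `𝒟`. -/
def DstarDemand : Demand E where
  P := Mo.Pstar
  D := Mo.Dstar
  P_anti := Mo.Pstar_anti
  P_cont := Mo.Pstar_cont
  P_ge := Mo.Pstar_ge
  P0 := Mo.Pstar0
  D_inv := Mo.Dstar_inv
  D_high := Mo.Dstar_high
  D_low := Mo.Dstar_low
  D_lt := Mo.Dstar_lt

/-- Expected welfare `W((q,u); V*, F*)` of a quantity mechanism under the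
conjectured model. -/
def WStar (q u : ℝ → ℝ) : ℝ :=
  ∫ θ in E.θl..E.θu, (Mo.Vstar (q θ) - θ * q θ - u θ) * Mo.fstar θ

/-- Expected welfare `W̃((p,t); D*, F*)` of a price regulation under the
conjectured model. -/
def WtStar (p : ℝ → ℝ) (t : ℝ → Demand E → ℝ) : ℝ :=
  ∫ θ in E.θl..E.θu, E.wt p t θ Mo.DstarDemand * Mo.fstar θ

/-- A robustly optimal price regulation: in the price short list, and maximizing
expected welfare under the conjectured model over the price short list. -/
def RobustlyOptimalPR (p : ℝ → ℝ) (t : ℝ → Demand E → ℝ) : Prop :=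
  E.PriceShortList p t ∧
    ∀ (p' : ℝ → ℝ) (t' : ℝ → Demand E → ℝ), E.PriceShortList p' t' →
      Mo.WtStar p' t' ≤ Mo.WtStar p t

/-- A Baron–Myerson-with-price-cap regulation. -/
def IsBMPriceCap (p : ℝ → ℝ) (t : ℝ → Demand E → ℝ) : Prop :=
  E.IsAdmissiblePR p t ∧
  (∀ θ ∈ E.Θ, p θ = min (Mo.zstar θ) E.θu) ∧
  (∀ θ ∈ E.Θ, ∀ D : Demand E,
    E.rent p t θ D = E.rent p t E.θu D + ∫ y in θ..E.θu, D.D (p y)) ∧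
  (∀ D : Demand E, D ≠ E.DlDemand → D ≠ Mo.DstarDemand →
    0 ≤ E.rent p t E.θu D ∧
      E.rent p t E.θu D ≤ D.V (D.D E.θu) - E.θu * D.D E.θu - E.Gstar) ∧
  E.rent p t E.θu E.DlDemand = 0 ∧ E.rent p t E.θu Mo.DstarDemand = 0

end Model

section Aux

open intervalIntegral

/-- Integrability of a continuous inverse demand on subintervals. -/
lemma aux_intInt {P : ℝ → ℝ} {qb : ℝ} (hc : ContinuousOn P (Icc 0 qb))
    {a b : ℝ} (ha : a ∈ Icc (0:ℝ) qb) (hb : b ∈ Icc (0:ℝ) qb) :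
    IntervalIntegrable P volume a b :=
  ContinuousOn.intervalIntegrable (hc.mono (Set.ordConnected_Icc.uIcc_subset ha hb))

/-- Difference of primitives. -/
lemma aux_Vdiff {P : ℝ → ℝ} {qb : ℝ} (hqb : 0 ≤ qb) (hc : ContinuousOn P (Icc 0 qb))
    {a b : ℝ} (ha : a ∈ Icc (0:ℝ) qb) (hb : b ∈ Icc (0:ℝ) qb) :
    (∫ s in (0:ℝ)..b, P s) - (∫ s in (0:ℝ)..a, P s) = ∫ s in a..b, P s :=
  integral_interval_sub_left (aux_intInt hc ⟨le_rfl, hqb⟩ hb) (aux_intInt hc ⟨le_rfl, hqb⟩ ha)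

/-- The primitive of a continuous function is continuous on the interval. -/
lemma aux_V_contOn {P : ℝ → ℝ} {qb : ℝ} (hqb : 0 ≤ qb) (hc : ContinuousOn P (Icc 0 qb)) :
    ContinuousOn (fun x => ∫ s in (0:ℝ)..x, P s) (Icc 0 qb) := by
  obtain ⟨C, hC⟩ := isCompact_Icc.exists_bound_of_continuousOn hc
  have hC0 : 0 ≤ C := le_trans (norm_nonneg _) (hC 0 ⟨le_rfl, hqb⟩)
  rw [Metric.continuousOn_iff]
  intro x hx ε hε
  refine ⟨ε / (C + 1), by positivity, fun y hy hdist => ?_⟩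
  have hdiff : (∫ s in (0:ℝ)..y, P s) - (∫ s in (0:ℝ)..x, P s) = ∫ s in x..y, P s :=
    aux_Vdiff hqb hc hx hy
  have hbound : ‖∫ s in x..y, P s‖ ≤ C * |y - x| := by
    apply intervalIntegral.norm_integral_le_of_norm_le_const
    intro z hz
    exact hC z (Set.ordConnected_Icc.uIcc_subset hx hy (Set.uIoc_subset_uIcc hz))
  rw [Real.dist_eq, ← hdiff] at *
  have h1 : |y - x| < ε / (C + 1) := hdist
  have h2 : C * |y - x| ≤ C * (ε / (C + 1)) := by nlinarith [abs_nonneg (y - x)]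
  have h3 : C * (ε / (C + 1)) < ε := by
    rw [mul_div_assoc']
    rw [div_lt_iff₀ (by linarith)]
    nlinarith
  calc |(∫ s in (0:ℝ)..y, P s) - ∫ s in (0:ℝ)..x, P s| ≤ C * |y - x| := hbound
    _ < ε := lt_of_le_of_lt h2 h3

/-- Strict midpoint concavity of the primitive of a strictly decreasing function. -/
lemma aux_strict_concave {P : ℝ → ℝ} {qb : ℝ} (hqb : 0 ≤ qb)
    (hanti : StrictAntiOn P (Icc 0 qb)) (hc : ContinuousOn P (Icc 0 qb))
    {a b : ℝ} (ha : a ∈ Icc (0:ℝ) qb) (hb : b ∈ Icc (0:ℝ) qb) (hab : a < b) :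
    (∫ s in (0:ℝ)..a, P s) + (∫ s in (0:ℝ)..b, P s) < 2 * ∫ s in (0:ℝ)..((a + b) / 2), P s := by
  set m := (a + b) / 2 with hm
  have hmK : m ∈ Icc (0:ℝ) qb := ⟨by simp only [hm]; linarith [ha.1, hb.1],
    by simp only [hm]; linarith [ha.2, hb.2]⟩
  have ham : a < m := by simp only [hm]; linarith
  have hmb : m < b := by simp only [hm]; linarith
  have hint_am : IntervalIntegrable P volume a m := aux_intInt hc ha hmK
  have hint_mb : IntervalIntegrable P volume m b := aux_intInt hc hmK hb
  have h1 : 0 < ∫ s in a..m, (P s - P m) := by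
    apply intervalIntegral_pos_of_pos_on (hint_am.sub intervalIntegrable_const) _ ham
    intro x hx
    have hxK : x ∈ Icc (0:ℝ) qb := ⟨le_trans ha.1 hx.1.le, le_trans hx.2.le hmK.2⟩
    exact sub_pos.2 (hanti hxK hmK hx.2)
  have h2 : 0 < ∫ s in m..b, (P m - P s) := by
    apply intervalIntegral_pos_of_pos_on (intervalIntegrable_const.sub hint_mb) _ hmb
    intro x hx
    have hxK : x ∈ Icc (0:ℝ) qb := ⟨le_trans hmK.1 hx.1.le, le_trans hx.2.le hb.2⟩
    exact sub_pos.2 (hanti hmK hxK hx.1)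
  rw [intervalIntegral.integral_sub hint_am intervalIntegrable_const] at h1
  rw [intervalIntegral.integral_sub intervalIntegrable_const hint_mb] at h2
  rw [intervalIntegral.integral_const] at h1 h2
  have hVam : (∫ s in (0:ℝ)..m, P s) - (∫ s in (0:ℝ)..a, P s) = ∫ s in a..m, P s :=
    aux_Vdiff hqb hc ha hmK
  have hVmb : (∫ s in (0:ℝ)..b, P s) - (∫ s in (0:ℝ)..m, P s) = ∫ s in m..b, P s :=
    aux_Vdiff hqb hc hmK hb
  have hlen : m - a = b - m := by simp only [hm]; ring
  simp only [smul_eq_mul] at h1 h2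
  have hsub : (m - a) * P m = (b - m) * P m := by rw [hlen]
  linarith

/-- Weak midpoint concavity of the primitive of a strictly decreasing function. -/
lemma aux_mid_concave {P : ℝ → ℝ} {qb : ℝ} (hqb : 0 ≤ qb)
    (hanti : StrictAntiOn P (Icc 0 qb)) (hc : ContinuousOn P (Icc 0 qb))
    {a b : ℝ} (ha : a ∈ Icc (0:ℝ) qb) (hb : b ∈ Icc (0:ℝ) qb) :
    (∫ s in (0:ℝ)..a, P s) + (∫ s in (0:ℝ)..b, P s) ≤ 2 * ∫ s in (0:ℝ)..((a + b) / 2), P s := by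
  rcases lt_trichotomy a b with h | h | h
  · exact (aux_strict_concave hqb hanti hc ha hb h).le
  · subst h
    have : (a + a) / 2 = a := by ring
    rw [this]; ring_nf; exact le_rfl
  · have := aux_strict_concave hqb hanti hc hb ha h
    have hcomm : (b + a) / 2 = (a + b) / 2 := by ring
    rw [hcomm] at this
    linarith

namespace Env

variable (E : Env)

lemma Pl_qbar_le : E.Pl E.qbar ≤ E.θl := by
  by_contra h
  push_neg at h
  have := E.Dl_low E.θl h
  have := E.Dl_lt
  simp_all

lemma ql_spec : E.ql ∈ Icc (0:ℝ) E.qbar ∧ E.Pl E.ql = E.θu :=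
  E.Dl_inv E.θu (le_trans E.Pl_qbar_le E.θlu.le) E.Pl0.le

/-- `q_ℓ` is the unique maximizer of `V̲(x) − θu·x` on `[0, qbar]`. -/
lemma value_lt {x : ℝ} (hx : x ∈ Icc (0:ℝ) E.qbar) (hne : x ≠ E.ql) :
    E.Vl x - E.θu * x < E.Gstar := by
  obtain ⟨hqlK, hPql⟩ := E.ql_spec
  have hqb : (0:ℝ) ≤ E.qbar := E.qbar_pos.le
  simp only [Env.Gstar, Env.Vl]
  rcases Ne.lt_or_gt hne with h | h
  · -- x < ql
    have hd : (∫ s in (0:ℝ)..E.ql, E.Pl s) - (∫ s in (0:ℝ)..x, E.Pl s) = ∫ s in x..E.ql, E.Pl s :=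
      aux_Vdiff hqb E.Pl_cont hx hqlK
    have hpos : 0 < ∫ s in x..E.ql, (E.Pl s - E.θu) := by
      apply intervalIntegral_pos_of_pos_on
        ((aux_intInt E.Pl_cont hx hqlK).sub intervalIntegrable_const) _ h
      intro s hs
      have hsK : s ∈ Icc (0:ℝ) E.qbar := ⟨le_trans hx.1 hs.1.le, le_trans hs.2.le hqlK.2⟩
      have := E.Pl_anti hsK hqlK hs.2
      rw [hPql] at this
      linarith
    rw [intervalIntegral.integral_sub (aux_intInt E.Pl_cont hx hqlK) intervalIntegrable_const,
      intervalIntegral.integral_const, smul_eq_mul] at hpos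
    nlinarith
  · -- ql < x
    have hd : (∫ s in (0:ℝ)..x, E.Pl s) - (∫ s in (0:ℝ)..E.ql, E.Pl s) = ∫ s in E.ql..x, E.Pl s :=
      aux_Vdiff hqb E.Pl_cont hqlK hx
    have hpos : 0 < ∫ s in E.ql..x, (E.θu - E.Pl s) := by
      apply intervalIntegral_pos_of_pos_on
        (intervalIntegrable_const.sub (aux_intInt E.Pl_cont hqlK hx)) _ h
      intro s hs
      have hsK : s ∈ Icc (0:ℝ) E.qbar := ⟨le_trans hqlK.1 hs.1.le, le_trans hs.2.le hx.2⟩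
      have := E.Pl_anti hqlK hsK hs.1
      rw [hPql] at this
      linarith
    rw [intervalIntegral.integral_sub intervalIntegrable_const (aux_intInt E.Pl_cont hqlK hx),
      intervalIntegral.integral_const, smul_eq_mul] at hpos
    nlinarith

/-- In any feasible schedule for (ROPT), the highest type produces `q_ℓ`. -/
lemma feas_top {q : ℝ → ℝ} (h : E.FeasibleROPT q) : q E.θu = E.ql := by
  have hθu : E.θu ∈ E.Θ := ⟨E.θlu.le, le_rfl⟩
  have h2 := h.2 _ hθu
  simp only [Env.Wl, intervalIntegral.integral_same, sub_zero] at h2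
  by_contra hne
  have := E.value_lt (h.1.2 _ hθu) hne
  linarith

/-- The midpoint of two feasible schedules is feasible. -/
lemma mid_feasible {q1 q2 : ℝ → ℝ} (h1 : E.FeasibleROPT q1) (h2 : E.FeasibleROPT q2) :
    E.FeasibleROPT (fun θ => (q1 θ + q2 θ) / 2) := by
  refine ⟨⟨?_, ?_⟩, ?_⟩
  · intro x hx y hy hxy
    have a1 := h1.1.1 hx hy hxy
    have a2 := h2.1.1 hx hy hxy
    dsimp only
    linarith
  · intro θ hθ
    have a1 := h1.1.2 θ hθ
    have a2 := h2.1.2 θ hθ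
    exact ⟨by dsimp only; linarith [a1.1, a2.1], by dsimp only; linarith [a1.2, a2.2]⟩
  · intro θ hθ
    have hWl1 := h1.2 θ hθ
    have hWl2 := h2.2 θ hθ
    have hsub : uIcc θ E.θu ⊆ E.Θ := by
      rw [uIcc_of_le hθ.2]
      exact Icc_subset_Icc hθ.1 le_rfl
    have hi1 : IntervalIntegrable q1 volume θ E.θu := (h1.1.1.mono hsub).intervalIntegrable
    have hi2 : IntervalIntegrable q2 volume θ E.θu := (h2.1.1.mono hsub).intervalIntegrable
    have hintmid : (∫ y in θ..E.θu, (q1 y + q2 y) / 2)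
        = ((∫ y in θ..E.θu, q1 y) + ∫ y in θ..E.θu, q2 y) / 2 := by
      rw [intervalIntegral.integral_div, intervalIntegral.integral_add hi1 hi2]
    have hVm : E.Vl (q1 θ) + E.Vl (q2 θ) ≤ 2 * E.Vl ((q1 θ + q2 θ) / 2) := by
      simp only [Env.Vl]
      exact aux_mid_concave E.qbar_pos.le E.Pl_anti E.Pl_cont (h1.1.2 θ hθ) (h2.1.2 θ hθ)
    simp only [Env.Wl] at hWl1 hWl2 ⊢
    rw [hintmid]
    linarith

end Env
namespace Model

variable {E : Env} (Mo : Model E)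

lemma Dstar_mem (p : ℝ) : Mo.Dstar p ∈ Icc (0:ℝ) E.qbar := by
  rcases lt_or_ge p (Mo.Pstar E.qbar) with h | h
  · rw [Mo.Dstar_low p h]; exact ⟨E.qbar_pos.le, le_rfl⟩
  rcases le_or_gt p (Mo.Pstar 0) with h2 | h2
  · exact (Mo.Dstar_inv p h h2).1
  · rw [Mo.Dstar_high p h2]; exact ⟨le_rfl, E.qbar_pos.le⟩

lemma qstar_mem (θ : ℝ) : Mo.qstar θ ∈ Icc (0:ℝ) E.qbar := by
  have h1 := Mo.Dstar_mem (Mo.zstar θ)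
  have h2 := E.ql_spec.1
  simp only [Model.qstar, Model.qBM]
  exact ⟨le_trans h2.1 (le_max_right _ _), max_le h1.2 h2.2⟩

/-- Near-continuity of `q*` from below. -/
lemma qstar_lower {θ0 : ℝ} (hθ0 : θ0 ∈ E.Θ) {ε : ℝ} (hε : 0 < ε) :
    ∃ δ > 0, ∀ s ∈ E.Θ, |s - θ0| < δ → Mo.qstar θ0 - ε < Mo.qstar s := by
  have hql0 : (0:ℝ) ≤ E.ql := E.ql_spec.1.1
  by_cases hc : Mo.qstar θ0 - ε < E.ql
  · refine ⟨1, one_pos, fun s _ _ => lt_of_lt_of_le hc ?_⟩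
    simp only [Model.qstar]
    exact le_max_right _ _
  push_neg at hc
  set x0 := Mo.qstar θ0 with hx0
  set y := x0 - ε / 2 with hy
  have hql_lt : E.ql < x0 := by linarith
  have hDz : x0 = Mo.Dstar (Mo.zstar θ0) := by
    rcases max_cases (Mo.Dstar (Mo.zstar θ0)) E.ql with ⟨hm1, _⟩ | ⟨hm1, _⟩
    · rw [hx0]; simp only [Model.qstar, Model.qBM]; exact hm1
    · exfalso
      have : x0 = E.ql := by rw [hx0]; simp only [Model.qstar, Model.qBM]; exact hm1
      rw [this] at hql_lt; exact lt_irrefl _ hql_lt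
  have hx0K : x0 ∈ Icc (0:ℝ) E.qbar := Mo.qstar_mem θ0
  have hyK : y ∈ Icc (0:ℝ) E.qbar := ⟨by simp only [hy]; linarith, by
    have := hx0K.2; simp only [hy]; linarith⟩
  have hyx0 : y < x0 := by simp only [hy]; linarith
  have hPx0 : Mo.zstar θ0 ≤ Mo.Pstar x0 := by
    rcases lt_or_ge (Mo.zstar θ0) (Mo.Pstar E.qbar) with h | h
    · have hq : x0 = E.qbar := by rw [hDz, Mo.Dstar_low _ h]
      rw [hq]; exact h.le
    rcases le_or_gt (Mo.zstar θ0) (Mo.Pstar 0) with h2 | h2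
    · rw [hDz]; exact ((Mo.Dstar_inv _ h h2).2).ge
    · exfalso
      have : x0 = 0 := by rw [hDz, Mo.Dstar_high _ h2]
      rw [this] at hql_lt; linarith
  have hPyx : Mo.Pstar x0 < Mo.Pstar y := Mo.Pstar_anti hyK hx0K hyx0
  have hczθ : Mo.zstar θ0 < Mo.Pstar y := lt_of_le_of_lt hPx0 hPyx
  have hzc : ContinuousWithinAt Mo.zstar E.Θ θ0 := Mo.zstar_cont θ0 hθ0
  have hev : ∀ᶠ s in nhdsWithin θ0 E.Θ, Mo.zstar s < Mo.Pstar y :=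
    Filter.Tendsto.eventually_lt_const hczθ hzc
  rw [Filter.eventually_iff, Metric.mem_nhdsWithin_iff] at hev
  obtain ⟨δ, hδ, hsub⟩ := hev
  refine ⟨δ, hδ, fun s hs hdist => ?_⟩
  have hzs : Mo.zstar s < Mo.Pstar y := hsub ⟨Metric.mem_ball.2 (by rwa [Real.dist_eq]), hs⟩
  have hyD : y ≤ Mo.Dstar (Mo.zstar s) := by
    rcases lt_or_ge (Mo.zstar s) (Mo.Pstar E.qbar) with h | h
    · rw [Mo.Dstar_low _ h]; exact hyK.2
    · have hPy0 : Mo.Pstar y ≤ Mo.Pstar 0 :=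
        Mo.Pstar_anti.antitoneOn ⟨le_rfl, E.qbar_pos.le⟩ hyK hyK.1
      have h2 : Mo.zstar s ≤ Mo.Pstar 0 := le_trans hzs.le hPy0
      obtain ⟨hmem, hPD⟩ := Mo.Dstar_inv _ h h2
      by_contra hlt
      push_neg at hlt
      have := Mo.Pstar_anti hmem hyK hlt
      rw [hPD] at this
      linarith
  have : y ≤ Mo.qstar s := le_trans hyD (by simp only [Model.qstar, Model.qBM]; exact le_max_left _ _)
  simp only [hy] at this
  linarith

/-- Near-continuity of `q*` from above. -/
lemma qstar_upper {θ0 : ℝ} (hθ0 : θ0 ∈ E.Θ) {ε : ℝ} (hε : 0 < ε) :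
    ∃ δ > 0, ∀ s ∈ E.Θ, |s - θ0| < δ → Mo.qstar s < Mo.qstar θ0 + ε := by
  have hql0 : (0:ℝ) ≤ E.ql := E.ql_spec.1.1
  set x0 := Mo.qstar θ0 with hx0
  have hx0K : x0 ∈ Icc (0:ℝ) E.qbar := Mo.qstar_mem θ0
  by_cases hc : E.qbar < x0 + ε
  · exact ⟨1, one_pos, fun s _ _ => lt_of_le_of_lt (Mo.qstar_mem s).2 hc⟩
  push_neg at hc
  set y := x0 + ε / 2 with hy
  have hyK : y ∈ Icc (0:ℝ) E.qbar := ⟨by simp only [hy]; linarith [hx0K.1],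
    by simp only [hy]; linarith⟩
  have hx0y : x0 < y := by simp only [hy]; linarith
  have hqlx0 : E.ql ≤ x0 := by
    rw [hx0]; simp only [Model.qstar, Model.qBM]; exact le_max_right _ _
  have hDlex : Mo.Dstar (Mo.zstar θ0) ≤ x0 := by
    rw [hx0]; simp only [Model.qstar, Model.qBM]; exact le_max_left _ _
  have hPyz : Mo.Pstar y < Mo.zstar θ0 := by
    by_contra hcon
    push_neg at hcon
    rcases lt_or_ge (Mo.zstar θ0) (Mo.Pstar E.qbar) with h | h
    · have : Mo.Dstar (Mo.zstar θ0) = E.qbar := Mo.Dstar_low _ h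
      rw [this] at hDlex
      have := hyK.2
      linarith
    · have hPy0 : Mo.Pstar y ≤ Mo.Pstar 0 :=
        Mo.Pstar_anti.antitoneOn ⟨le_rfl, E.qbar_pos.le⟩ hyK hyK.1
      have h2 : Mo.zstar θ0 ≤ Mo.Pstar 0 := le_trans hcon hPy0
      obtain ⟨hmem, hPD⟩ := Mo.Dstar_inv _ h h2
      have hge : y ≤ Mo.Dstar (Mo.zstar θ0) := by
        by_contra hlt
        push_neg at hlt
        have := Mo.Pstar_anti hmem hyK hlt
        rw [hPD] at this
        linarith
      linarith
  have hzc : ContinuousWithinAt Mo.zstar E.Θ θ0 := Mo.zstar_cont θ0 hθ0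
  have hev : ∀ᶠ s in nhdsWithin θ0 E.Θ, Mo.Pstar y < Mo.zstar s :=
    Filter.Tendsto.eventually_const_lt hPyz hzc
  rw [Filter.eventually_iff, Metric.mem_nhdsWithin_iff] at hev
  obtain ⟨δ, hδ, hsub⟩ := hev
  refine ⟨δ, hδ, fun s hs hdist => ?_⟩
  have hzs : Mo.Pstar y < Mo.zstar s := hsub ⟨Metric.mem_ball.2 (by rwa [Real.dist_eq]), hs⟩
  have hDy : Mo.Dstar (Mo.zstar s) ≤ y := by
    rcases lt_or_ge (Mo.Pstar 0) (Mo.zstar s) with h | h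
    · rw [Mo.Dstar_high _ h]; exact hyK.1
    · have h1 : Mo.Pstar E.qbar ≤ Mo.zstar s := by
        have : Mo.Pstar E.qbar ≤ Mo.Pstar y :=
          Mo.Pstar_anti.antitoneOn hyK ⟨E.qbar_pos.le, le_rfl⟩ hyK.2
        linarith
      obtain ⟨hmem, hPD⟩ := Mo.Dstar_inv _ h1 h
      by_contra hlt
      push_neg at hlt
      have := Mo.Pstar_anti hyK hmem hlt
      rw [hPD] at this
      linarith
  have : Mo.qstar s ≤ y := by
    simp only [Model.qstar, Model.qBM]
    exact max_le hDy (by linarith)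
  simp only [hy] at this
  linarith

lemma fstar_intInt : IntervalIntegrable Mo.fstar volume E.θl E.θu := by
  by_contra h
  have h0 := intervalIntegral.integral_undef h
  have h2 := Mo.Fstar_ac E.θu ⟨E.θlu.le, le_rfl⟩
  rw [Mo.Fstar_u, h0] at h2
  exact one_ne_zero h2

lemma fstar_integrableOn : IntegrableOn Mo.fstar (Ioc E.θl E.θu) volume := by
  have := Mo.fstar_intInt
  rwa [intervalIntegrable_iff_integrableOn_Ioc_of_le E.θlu.le] at this

/-- The (ROPT) objective integrand is integrable for any schedule. -/
lemma integrand_integrable {q : ℝ → ℝ} (hq : E.IsSchedule q) :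
    IntegrableOn (fun θ => (Mo.Vstar (q θ) - Mo.zstar θ * q θ) * Mo.fstar θ)
      (Ioc E.θl E.θu) volume := by
  classical
  have hKc : IsCompact (Icc (0:ℝ) E.qbar) := isCompact_Icc
  set c : ℝ → ℝ := fun θ => max E.θl (min θ E.θu) with hcdef
  have hcmem : ∀ θ, c θ ∈ E.Θ := fun θ =>
    ⟨le_max_left _ _, max_le E.θlu.le (min_le_right _ _)⟩
  have hcmono : Monotone c := fun a b hab =>
    max_le_max le_rfl (min_le_min hab le_rfl)
  set Q : ℝ → ℝ := fun θ => q (c θ) with hQdef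
  have hQanti : Antitone Q := fun a b hab => hq.1 (hcmem a) (hcmem b) (hcmono hab)
  have hQmeas : Measurable Q := hQanti.measurable
  have hQK : ∀ θ, Q θ ∈ Icc (0:ℝ) E.qbar := fun θ => hq.2 _ (hcmem θ)
  have hEq : EqOn (fun θ => (Mo.Vstar (Q θ) - Mo.zstar θ * Q θ) * Mo.fstar θ)
      (fun θ => (Mo.Vstar (q θ) - Mo.zstar θ * q θ) * Mo.fstar θ) (Ioc E.θl E.θu) := by
    intro θ hθ
    have hcθ : c θ = θ := by
      simp only [hcdef]
      rw [min_eq_left hθ.2, max_eq_right hθ.1.le]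
    simp only [hQdef, hcθ]
  have hVc : ContinuousOn Mo.Vstar (Icc (0:ℝ) E.qbar) :=
    aux_V_contOn E.qbar_pos.le Mo.Pstar_cont
  refine IntegrableOn.congr_fun ?_ hEq measurableSet_Ioc
  have hVQ : Measurable fun θ => Mo.Vstar (Q θ) := by
    have heq : (fun θ => Mo.Vstar (Q θ))
        = ((Icc (0:ℝ) E.qbar).restrict Mo.Vstar) ∘ (fun θ => (⟨Q θ, hQK θ⟩ : Icc (0:ℝ) E.qbar)) :=
      rfl
    rw [heq]
    exact (ContinuousOn.restrict hVc).measurable.comp (hQmeas.subtype_mk)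
  have hzΘ : ContinuousOn Mo.zstar E.Θ := Mo.zstar_cont
  have hzae : AEMeasurable Mo.zstar (volume.restrict (Ioc E.θl E.θu)) := by
    have h1 : AEMeasurable Mo.zstar (volume.restrict E.Θ) :=
      hzΘ.aemeasurable measurableSet_Icc
    exact h1.mono_measure (Measure.restrict_mono Ioc_subset_Icc_self le_rfl)
  have hfint : IntegrableOn Mo.fstar (Ioc E.θl E.θu) volume := Mo.fstar_integrableOn
  have hfae : AEMeasurable Mo.fstar (volume.restrict (Ioc E.θl E.θu)) :=
    hfint.aemeasurable
  have hmeas : AEStronglyMeasurable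
      (fun θ => (Mo.Vstar (Q θ) - Mo.zstar θ * Q θ) * Mo.fstar θ)
      (volume.restrict (Ioc E.θl E.θu)) :=
    ((hVQ.aemeasurable.sub (hzae.mul hQmeas.aemeasurable)).mul hfae).aestronglyMeasurable
  obtain ⟨C1, hC1⟩ := hKc.exists_bound_of_continuousOn hVc
  obtain ⟨C2, hC2⟩ := (isCompact_Icc : IsCompact (Icc E.θl E.θu)).exists_bound_of_continuousOn hzΘ
  have hgint : Integrable (fun θ => (C1 + C2 * E.qbar) * Mo.fstar θ)
      (volume.restrict (Ioc E.θl E.θu)) := hfint.const_mul _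
  refine hgint.mono' hmeas ?_
  rw [ae_restrict_iff' measurableSet_Ioc]
  filter_upwards with θ hθ
  have hθΘ : θ ∈ E.Θ := ⟨hθ.1.le, hθ.2⟩
  have hf0 : 0 ≤ Mo.fstar θ := (Mo.fstar_pos θ hθΘ).le
  have hb1 : |Mo.Vstar (Q θ)| ≤ C1 := by
    have := hC1 _ (hQK θ); rwa [Real.norm_eq_abs] at this
  have hb2 : |Mo.zstar θ| ≤ C2 := by
    have := hC2 θ hθΘ; rwa [Real.norm_eq_abs] at this
  have hb3 : |Q θ| ≤ E.qbar :=
    abs_le.2 ⟨by linarith [(hQK θ).1, E.qbar_pos.le], (hQK θ).2⟩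
  have h6 : |Mo.zstar θ * Q θ| ≤ C2 * E.qbar := by
    rw [abs_mul]
    exact mul_le_mul hb2 hb3 (abs_nonneg _) (le_trans (abs_nonneg _) hb2)
  have h5 : |Mo.Vstar (Q θ) - Mo.zstar θ * Q θ| ≤ C1 + C2 * E.qbar :=
    (abs_sub _ _).trans (add_le_add hb1 h6)
  rw [Real.norm_eq_abs, abs_mul, abs_of_nonneg hf0]
  exact mul_le_mul_of_nonneg_right h5 hf0

end Model

/-- Corollary 1 (uniqueness of the output schedule): if `q*` solves (ROPT), then every
solution of (ROPT) coincides with `q*` on `(θl, θu]`. -/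
theorem ROPT_unique_schedule (E : Env) (Mo : Model E)
    (hstar : Mo.SolvesROPT Mo.qstar)
    (qOPT : ℝ → ℝ) (hOPT : Mo.SolvesROPT qOPT) :
    ∀ θ ∈ Ioc E.θl E.θu, qOPT θ = Mo.qstar θ := by
  classical
  obtain ⟨hfeas2, hopt2⟩ := hstar
  obtain ⟨hfeas1, hopt1⟩ := hOPT
  set F : (ℝ → ℝ) → ℝ → ℝ :=
    fun q θ => (Mo.Vstar (q θ) - Mo.zstar θ * q θ) * Mo.fstar θ with hF
  set qm : ℝ → ℝ := fun θ => (qOPT θ + Mo.qstar θ) / 2 with hqm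
  have hfm : E.FeasibleROPT qm := E.mid_feasible hfeas1 hfeas2
  have hJ : ∀ q : ℝ → ℝ, Mo.J q = ∫ θ in Ioc E.θl E.θu, F q θ := fun q => by
    rw [show Mo.J q = ∫ θ in E.θl..E.θu, F q θ from rfl,
      intervalIntegral.integral_of_le E.θlu.le]
  have hJeq : Mo.J qOPT = Mo.J Mo.qstar :=
    le_antisymm (hopt2 _ hfeas1) (hopt1 _ hfeas2)
  have hJm : Mo.J qm ≤ Mo.J Mo.qstar := hopt2 _ hfm
  have hint1 : IntegrableOn (F qOPT) (Ioc E.θl E.θu) volume :=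
    Mo.integrand_integrable hfeas1.1
  have hint2 : IntegrableOn (F Mo.qstar) (Ioc E.θl E.θu) volume :=
    Mo.integrand_integrable hfeas2.1
  have hintm : IntegrableOn (F qm) (Ioc E.θl E.θu) volume :=
    Mo.integrand_integrable hfm.1
  -- pointwise computation
  have hcalc : ∀ θ : ℝ, F qm θ - (F qOPT θ + F Mo.qstar θ) / 2
      = (Mo.Vstar ((qOPT θ + Mo.qstar θ) / 2)
        - (Mo.Vstar (qOPT θ) + Mo.Vstar (Mo.qstar θ)) / 2) * Mo.fstar θ := by
    intro θ
    simp only [hF, hqm]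
    ring
  have hnn : ∀ θ ∈ Ioc E.θl E.θu, 0 ≤ F qm θ - (F qOPT θ + F Mo.qstar θ) / 2 := by
    intro θ hθ
    have hθΘ : θ ∈ E.Θ := ⟨hθ.1.le, hθ.2⟩
    have ha := hfeas1.1.2 θ hθΘ
    have hb := hfeas2.1.2 θ hθΘ
    have hconc : Mo.Vstar (qOPT θ) + Mo.Vstar (Mo.qstar θ)
        ≤ 2 * Mo.Vstar ((qOPT θ + Mo.qstar θ) / 2) :=
      aux_mid_concave E.qbar_pos.le Mo.Pstar_anti Mo.Pstar_cont ha hb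
    have hf0 : 0 ≤ Mo.fstar θ := (Mo.fstar_pos θ hθΘ).le
    rw [hcalc θ]
    apply mul_nonneg _ hf0
    linarith
  -- the integral of the gap is ≤ 0 and ≥ 0
  have hsum : Integrable (fun θ => (F qOPT θ + F Mo.qstar θ) / 2)
      (volume.restrict (Ioc E.θl E.θu)) := (hint1.add hint2).div_const 2
  have hgap : Integrable (fun θ => F qm θ - (F qOPT θ + F Mo.qstar θ) / 2)
      (volume.restrict (Ioc E.θl E.θu)) := hintm.sub hsum
  have hkey : (∫ θ in Ioc E.θl E.θu, (F qm θ - (F qOPT θ + F Mo.qstar θ) / 2))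
      = Mo.J qm - (Mo.J qOPT + Mo.J Mo.qstar) / 2 := by
    rw [MeasureTheory.integral_sub hintm hsum, MeasureTheory.integral_div,
      MeasureTheory.integral_add hint1 hint2, hJ qm, hJ qOPT, hJ Mo.qstar]
  have hle : (∫ θ in Ioc E.θl E.θu, (F qm θ - (F qOPT θ + F Mo.qstar θ) / 2)) ≤ 0 := by
    rw [hkey]
    linarith
  have hge : 0 ≤ ∫ θ in Ioc E.θl E.θu, (F qm θ - (F qOPT θ + F Mo.qstar θ) / 2) :=
    MeasureTheory.setIntegral_nonneg measurableSet_Ioc hnn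
  have hzero : (∫ θ in Ioc E.θl E.θu, (F qm θ - (F qOPT θ + F Mo.qstar θ) / 2)) = 0 :=
    le_antisymm hle hge
  have hae0 : (fun θ => F qm θ - (F qOPT θ + F Mo.qstar θ) / 2)
      =ᵐ[volume.restrict (Ioc E.θl E.θu)] 0 := by
    refine (MeasureTheory.integral_eq_zero_iff_of_nonneg_ae ?_ hgap).mp hzero
    rw [Filter.EventuallyLE, ae_restrict_iff' measurableSet_Ioc]
    refine Filter.Eventually.of_forall fun θ hθ => ?_
    simpa using hnn θ hθ
  have haeeq : ∀ᵐ θ ∂(volume.restrict (Ioc E.θl E.θu)), qOPT θ = Mo.qstar θ := by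
    have hmem : ∀ᵐ θ ∂(volume.restrict (Ioc E.θl E.θu)), θ ∈ Ioc E.θl E.θu :=
      MeasureTheory.ae_restrict_mem measurableSet_Ioc
    filter_upwards [hae0, hmem] with θ hh hθ
    by_contra hne
    have hθΘ : θ ∈ E.Θ := ⟨hθ.1.le, hθ.2⟩
    have ha := hfeas1.1.2 θ hθΘ
    have hb := hfeas2.1.2 θ hθΘ
    have hconc : Mo.Vstar (qOPT θ) + Mo.Vstar (Mo.qstar θ)
        < 2 * Mo.Vstar ((qOPT θ + Mo.qstar θ) / 2) := by
      rcases Ne.lt_or_gt hne with h | h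
      · exact aux_strict_concave E.qbar_pos.le Mo.Pstar_anti Mo.Pstar_cont ha hb h
      · have hsw : Mo.Vstar (Mo.qstar θ) + Mo.Vstar (qOPT θ)
            < 2 * Mo.Vstar ((Mo.qstar θ + qOPT θ) / 2) :=
          aux_strict_concave E.qbar_pos.le Mo.Pstar_anti Mo.Pstar_cont hb ha h
        have hcomm : (Mo.qstar θ + qOPT θ) / 2 = (qOPT θ + Mo.qstar θ) / 2 := by ring
        rw [hcomm] at hsw
        linarith
    have hfpos : 0 < Mo.fstar θ := Mo.fstar_pos θ hθΘ
    have hh0 : F qm θ - (F qOPT θ + F Mo.qstar θ) / 2 = 0 := hh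
    rw [hcalc θ] at hh0
    nlinarith
  have hnull : volume ({θ | ¬ (qOPT θ = Mo.qstar θ)} ∩ Ioc E.θl E.θu) = 0 := by
    have := MeasureTheory.ae_iff.mp haeeq
    rwa [Measure.restrict_apply' measurableSet_Ioc] at this
  intro θ0 hθ0
  rcases eq_or_lt_of_le hθ0.2 with htop | hlt
  · rw [htop, E.feas_top hfeas1, E.feas_top hfeas2]
  · by_contra hne
    have hθΘ : θ0 ∈ E.Θ := ⟨hθ0.1.le, hθ0.2⟩
    rcases Ne.lt_or_gt hne with hlt2 | hgt2
    · -- qOPT θ0 < q* θ0 : look to the right of θ0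
      obtain ⟨δ, hδ, hδp⟩ := Mo.qstar_lower hθΘ (show 0 < Mo.qstar θ0 - qOPT θ0 by linarith)
      have hab : θ0 < min E.θu (θ0 + δ) := lt_min hlt (by linarith)
      have hsub : Ioo θ0 (min E.θu (θ0 + δ))
          ⊆ {θ | ¬ (qOPT θ = Mo.qstar θ)} ∩ Ioc E.θl E.θu := by
        intro s hs
        have hs1 : θ0 < s := hs.1
        have hs2 : s ≤ E.θu := (hs.2.trans_le (min_le_left _ _)).le
        have hsΘ : s ∈ E.Θ := ⟨(hθ0.1.trans hs1).le, hs2⟩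
        have hd : |s - θ0| < δ := by
          rw [abs_sub_lt_iff]
          constructor
          · have := hs.2.trans_le (min_le_right _ _); linarith
          · linarith
        have hq := hδp s hsΘ hd
        have hmono := hfeas1.1.1 hθΘ hsΘ hs1.le
        refine ⟨fun heq => ?_, ⟨hθ0.1.trans hs1, hs2⟩⟩
        rw [heq] at hmono
        linarith
      have h0 : volume (Ioo θ0 (min E.θu (θ0 + δ))) = 0 := measure_mono_null hsub hnull
      rw [Real.volume_Ioo] at h0
      rw [ENNReal.ofReal_eq_zero] at h0
      linarith
    · -- q* θ0 < qOPT θ0 : look to the left of θ0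
      obtain ⟨δ, hδ, hδp⟩ := Mo.qstar_upper hθΘ (show 0 < qOPT θ0 - Mo.qstar θ0 by linarith)
      have hab : max E.θl (θ0 - δ) < θ0 := max_lt hθ0.1 (by linarith)
      have hsub : Ioo (max E.θl (θ0 - δ)) θ0
          ⊆ {θ | ¬ (qOPT θ = Mo.qstar θ)} ∩ Ioc E.θl E.θu := by
        intro s hs
        have hs1 : s < θ0 := hs.2
        have hsl : E.θl < s := lt_of_le_of_lt (le_max_left _ _) hs.1
        have hsΘ : s ∈ E.Θ := ⟨hsl.le, (hs1.le.trans hθ0.2)⟩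
        have hd : |s - θ0| < δ := by
          rw [abs_sub_lt_iff]
          constructor
          · linarith
          · have := lt_of_le_of_lt (le_max_right _ _) hs.1; linarith
        have hq := hδp s hsΘ hd
        have hmono := hfeas1.1.1 hsΘ hθΘ hs1.le
        refine ⟨fun heq => ?_, ⟨hsl, hs1.le.trans hθ0.2⟩⟩
        rw [heq] at hmono
        linarith
      have h0 : volume (Ioo (max E.θl (θ0 - δ)) θ0) = 0 := measure_mono_null hsub hnull
      rw [Real.volume_Ioo] at h0
      rw [ENNReal.ofReal_eq_zero] at h0
      linarith
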